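/- Let m, n ≥ 2 and let (S,T) be an irreducible Cuntz-type atomic representation of F_θ^+ on H with standard basis {ξ_t}. Suppose V ⊆ H is a nonzero finite-dimensional subspace spanned by a set of standard basis vectors such that S_i*V ⊆ V and T_j*V ⊆ V for all i, j, such that H equals the closed linear span of {S_uT_vx : x ∈ V, u, v words}, and which is minimal among subspaces with these properties. If there exists a standard basis vector ζ orthogonal to V such that either S_uζ ∈ 𝕋ζ for some nonempty word u over {1,…,m}, or T_vζ ∈ 𝕋ζ for some nonempty word v over {1,…,n}, then some standard basis vector is a wandering vector for (S,T). -/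
import Mathlib


noncomputable section

open scoped InnerProductSpace ComplexInnerProductSpace Classical

section GeneralDefs

variable {E : Type*} [NormedAddCommGroup E] [InnerProductSpace ℂ E]

/-- The operator associated to a word: `wordOp V [a₁, …, a_r] = V a₁ * ⋯ * V a_r`. -/
def wordOp {ι : Type*} (V : ι → E →L[ℂ] E) (w : List ι) : E →L[ℂ] E :=
  (w.map V).prod

/-- The operator associated to a word of fixed length `k` given as a function `Fin k → ι`. -/
def fnWordOp {ι : Type*} {k : ℕ} (V : ι → E →L[ℂ] E) (u : Fin k → ι) : E →L[ℂ] E :=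
  wordOp V (List.ofFn u)

/-- The closure of a set of operators in the weak operator topology, described via
basic WOT-neighbourhoods (finitely many vector functionals). -/
def wotClosure (S : Set (E →L[ℂ] E)) : Set (E →L[ℂ] E) :=
  {A | ∀ ε > (0 : ℝ), ∀ F : Finset (E × E), ∃ B ∈ S, ∀ p ∈ F, ‖⟪p.1, (A - B) p.2⟫‖ < ε}

/-- The unital WOT-closed algebra generated by a set of operators. -/
def genWotAlg (G : Set (E →L[ℂ] E)) : Set (E →L[ℂ] E) :=
  wotClosure ((Algebra.adjoin ℂ G : Subalgebra ℂ (E →L[ℂ] E)) : Set (E →L[ℂ] E))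

/-- A wandering vector for a row-isometry `V = [V_a : a ∈ ι]`: a unit vector whose orbit
under all words in the `V_a` is an orthonormal family. -/
def IsWandering {ι : Type*} (V : ι → E →L[ℂ] E) (ζ : E) : Prop :=
  ‖ζ‖ = 1 ∧ ∀ w w' : List ι,
    ⟪wordOp V w ζ, wordOp V w' ζ⟫ = if w = w' then 1 else 0

/-- Restriction of an operator to an invariant subspace (junk value `0` if not invariant). -/
def restrictCLM (A : E →L[ℂ] E) (M : Submodule ℂ E) : M →L[ℂ] M :=
  if h : ∀ x ∈ M, A x ∈ M then
    { toFun := fun x => ⟨A x, h x x.2⟩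
      map_add' := by intro x y; ext; simp
      map_smul' := by intro c x; ext; simp
      cont := Continuous.subtype_mk (A.continuous.comp continuous_subtype_val) _ }
  else 0

/-- The unital WOT-closed algebra on `M` generated by the restrictions of the `V a` to `M`. -/
def rowAlgOn {ι : Type*} (V : ι → E →L[ℂ] E) (M : Submodule ℂ E) : Set (M →L[ℂ] M) :=
  genWotAlg (Set.range fun a => restrictCLM (V a) M)

/-- The unital WOT-closed algebra on `M` generated by the restrictions of the `V a`
is self-adjoint. -/
def restrictedAlgSelfAdjoint {ι : Type*} (V : ι → E →L[ℂ] E) (M : Submodule ℂ E) : Prop :=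
  ∀ A ∈ rowAlgOn V M, ∃ B ∈ rowAlgOn V M,
    ∀ x y : M, ⟪((A x : M) : E), (y : E)⟫ = ⟪(x : E), ((B y : M) : E)⟫

variable [CompleteSpace E]

/-- A row-isometry is of dilation type if it is defect free and has no nonzero reducing
subspace on which it is either absolutely continuous (spanned by wandering vectors) or
singular (generating a self-adjoint WOT-closed algebra). -/
def IsDilationType {ι : Type*} [Fintype ι] (V : ι → E →L[ℂ] E) : Prop :=
  (∑ a, V a * star (V a)) = 1 ∧
    ¬ ∃ M : Submodule ℂ E, M ≠ ⊥ ∧ IsClosed (M : Set E) ∧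
      (∀ a, ∀ x ∈ M, V a x ∈ M) ∧ (∀ a, ∀ x ∈ M, star (V a) x ∈ M) ∧
      ((M = (Submodule.span ℂ {ζ : E | ζ ∈ M ∧ IsWandering V ζ}).topologicalClosure) ∨
        restrictedAlgSelfAdjoint V M)

end GeneralDefs

/-- An isometric representation of the single-vertex 2-graph `F_θ⁺` on a Hilbert space `H`. -/
structure TwoGraphRep (m n : ℕ) (θ : Equiv.Perm (Fin m × Fin n)) (H : Type*)
    [NormedAddCommGroup H] [InnerProductSpace ℂ H] [CompleteSpace H] where
  S : Fin m → H →L[ℂ] H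
  T : Fin n → H →L[ℂ] H
  isometS : ∀ i i', star (S i) * S i' = if i = i' then 1 else 0
  isometT : ∀ j j', star (T j) * T j' = if j = j' then 1 else 0
  comm : ∀ i j, S i * T j = T (θ (i, j)).2 * S (θ (i, j)).1

namespace TwoGraphRep

variable {m n : ℕ} {θ : Equiv.Perm (Fin m × Fin n)} {H : Type*}
  [NormedAddCommGroup H] [InnerProductSpace ℂ H] [CompleteSpace H]

/-- A representation is of Cuntz type if both row-isometries are defect free. -/
def CuntzType (ρ : TwoGraphRep m n θ H) : Prop :=
  (∑ i, ρ.S i * star (ρ.S i)) = 1 ∧ (∑ j, ρ.T j * star (ρ.T j)) = 1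

/-- The nonself-adjoint 2-graph algebra `𝔖`: the unital WOT-closed algebra generated by
the `S_i` and `T_j`. -/
def alg (ρ : TwoGraphRep m n θ H) : Set (H →L[ℂ] H) :=
  genWotAlg (Set.range ρ.S ∪ Set.range ρ.T)

/-- The von Neumann algebra generated by the `S_i` and `T_j`: the WOT-closure of the
unital *-algebra they generate. -/
def vnAlg (ρ : TwoGraphRep m n θ H) : Set (H →L[ℂ] H) :=
  genWotAlg ((Set.range ρ.S ∪ Set.range ρ.T) ∪ star '' (Set.range ρ.S ∪ Set.range ρ.T))

/-- Wandering vector for the row-isometry `[S_u T_v : |u| = k, |v| = l]`. -/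
def IsWanderingKL (ρ : TwoGraphRep m n θ H) (k l : ℕ) (ζ : H) : Prop :=
  ‖ζ‖ = 1 ∧ ∀ (p p' : ℕ) (u u' : List (Fin m)) (v v' : List (Fin n)),
    u.length = p * k → v.length = p * l → u'.length = p' * k → v'.length = p' * l →
    ⟪(wordOp ρ.S u * wordOp ρ.T v) ζ, (wordOp ρ.S u' * wordOp ρ.T v') ζ⟫ =
      if u = u' ∧ v = v' then 1 else 0

/-- The range of the structure projection `P_{k,l}`: the orthogonal complement of the
closed linear span of the wandering vectors of `[S_u T_v : |u| = k, |v| = l]`. -/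
def structSpaceKL (ρ : TwoGraphRep m n θ H) (k l : ℕ) : Submodule ℂ H :=
  ((Submodule.span ℂ {ζ : H | ρ.IsWanderingKL k l ζ}).topologicalClosure)ᗮ

/-- The range of the first structure projection `P = ⋀_{k,l>0} P_{k,l}`. -/
def firstStructSpace (ρ : TwoGraphRep m n θ H) : Submodule ℂ H :=
  ⨅ (k : ℕ) (l : ℕ) (_ : 0 < k) (_ : 0 < l), ρ.structSpaceKL k l

/-- The row-isometry `[S_u T_v : |u| = k, |v| = l]`. -/
def rowKL (ρ : TwoGraphRep m n θ H) (k l : ℕ) :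
    ((Fin k → Fin m) × (Fin l → Fin n)) → H →L[ℂ] H :=
  fun p => fnWordOp ρ.S p.1 * fnWordOp ρ.T p.2

/-- A wandering vector for the representation `(S,T)`. -/
def IsWanderingRep (ρ : TwoGraphRep m n θ H) (ζ : H) : Prop :=
  ‖ζ‖ = 1 ∧ ∀ (u u' : List (Fin m)) (v v' : List (Fin n)),
    ⟪(wordOp ρ.S u * wordOp ρ.T v) ζ, (wordOp ρ.S u' * wordOp ρ.T v') ζ⟫ =
      if u = u' ∧ v = v' then 1 else 0

/-- The representation is irreducible: the only closed subspaces invariant under all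
`S_i, T_j, S_i*, T_j*` are `⊥` and `⊤`. -/
def Irreducible (ρ : TwoGraphRep m n θ H) : Prop :=
  ∀ M : Submodule ℂ H, IsClosed (M : Set H) →
    (∀ i, ∀ x ∈ M, ρ.S i x ∈ M) → (∀ i, ∀ x ∈ M, star (ρ.S i) x ∈ M) →
    (∀ j, ∀ x ∈ M, ρ.T j x ∈ M) → (∀ j, ∀ x ∈ M, star (ρ.T j) x ∈ M) →
    M = ⊥ ∨ M = ⊤

/-- The representation is atomic with standard basis `ξ`: every generator maps each basis
vector to a unimodular multiple of a basis vector. -/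
def AtomicBasis {Λ : Type*} (ρ : TwoGraphRep m n θ H) (ξ : HilbertBasis Λ ℂ H) : Prop :=
  (∀ i t, ∃ (c : ℂ) (t' : Λ), ‖c‖ = 1 ∧ ρ.S i (ξ t) = c • ξ t') ∧
  (∀ j t, ∃ (c : ℂ) (t' : Λ), ‖c‖ = 1 ∧ ρ.T j (ξ t) = c • ξ t')

/-- `x` has a blue ring: `S_u x ∈ 𝕋x` for some nonempty word `u`. -/
def HasBlueRing (ρ : TwoGraphRep m n θ H) (x : H) : Prop :=
  ∃ u : List (Fin m), u ≠ [] ∧ ∃ c : ℂ, ‖c‖ = 1 ∧ wordOp ρ.S u x = c • x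

/-- `x` has a red ring: `T_v x ∈ 𝕋x` for some nonempty word `v`. -/
def HasRedRing (ρ : TwoGraphRep m n θ H) (x : H) : Prop :=
  ∃ v : List (Fin n), v ≠ [] ∧ ∃ c : ℂ, ‖c‖ = 1 ∧ wordOp ρ.T v x = c • x

/-- `x` has a mixed ring: `T_v S_u x ∈ 𝕋x` for some nonempty words `u`, `v`. -/
def HasMixedRing (ρ : TwoGraphRep m n θ H) (x : H) : Prop :=
  ∃ (u : List (Fin m)) (v : List (Fin n)), u ≠ [] ∧ v ≠ [] ∧
    ∃ c : ℂ, ‖c‖ = 1 ∧ wordOp ρ.T v (wordOp ρ.S u x) = c • x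

end TwoGraphRep


namespace Statement5Aux

/-- Combinatorial data of an atomic representation: the action of the generators on
basis-vector indices. -/
structure AtomicData (m n : ℕ) (Λ : Type*) where
  e : Fin m → Λ → Λ
  f : Fin n → Λ → Λ
  injE : ∀ ⦃i i' : Fin m⦄ ⦃a a' : Λ⦄, e i a = e i' a' → i = i' ∧ a = a'
  injF : ∀ ⦃j j' : Fin n⦄ ⦃a a' : Λ⦄, f j a = f j' a' → j = j' ∧ a = a'
  surE : ∀ a : Λ, ∃ p : Fin m × Λ, e p.1 p.2 = a
  surF : ∀ a : Λ, ∃ p : Fin n × Λ, f p.1 p.2 = a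
  commEF : ∀ (i : Fin m) (j : Fin n) (a : Λ), ∃ (i' : Fin m) (j' : Fin n),
    e i (f j a) = f j' (e i' a)
  commFE : ∀ (j : Fin n) (i : Fin m) (a : Λ), ∃ (j' : Fin n) (i' : Fin m),
    f j (e i a) = e i' (f j' a)

namespace AtomicData

variable {m n : ℕ} {Λ : Type*} (D : AtomicData m n Λ)

/-- The swapped data. -/
def swap : AtomicData n m Λ :=
  ⟨D.f, D.e, D.injF, D.injE, D.surF, D.surE, D.commFE, D.commEF⟩

/-- The unique `e`-parent of a point. -/
def pe (a : Λ) : Λ := (D.surE a).choose.2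

def peIdx (a : Λ) : Fin m := (D.surE a).choose.1

lemma peSpec (a : Λ) : D.e (D.peIdx a) (D.pe a) = a := (D.surE a).choose_spec

/-- The unique `f`-parent of a point. -/
def pf (a : Λ) : Λ := (D.surF a).choose.2

def pfIdx (a : Λ) : Fin n := (D.surF a).choose.1

lemma pfSpec (a : Λ) : D.f (D.pfIdx a) (D.pf a) = a := (D.surF a).choose_spec

lemma swap_pe : D.swap.pe = D.pf := rfl
lemma swap_pf : D.swap.pf = D.pe := rfl

lemma pe_e (i : Fin m) (b : Λ) : D.pe (D.e i b) = b :=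
  (D.injE (D.peSpec (D.e i b))).2

lemma pf_f (j : Fin n) (b : Λ) : D.pf (D.f j b) = b :=
  (D.injF (D.pfSpec (D.f j b))).2

/-- The `f`-parent of an `e`-child: `τ(e_i x) = e_{i'}(τ x)`. -/
lemma pf_e (i : Fin m) (x : Λ) : ∃ i' : Fin m, D.pf (D.e i x) = D.e i' (D.pf x) := by
  obtain ⟨i', j', h⟩ := D.commEF i (D.pfIdx x) (D.pf x)
  rw [D.pfSpec x] at h
  exact ⟨i', by rw [h, D.pf_f]⟩

lemma pe_f (j : Fin n) (x : Λ) : ∃ j' : Fin n, D.pe (D.f j x) = D.f j' (D.pe x) := by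
  obtain ⟨j', i', h⟩ := D.commFE j (D.peIdx x) (D.pe x)
  rw [D.peSpec x] at h
  exact ⟨j', by rw [h, D.pe_e]⟩

lemma pe_pf_comm (x : Λ) : D.pe (D.pf x) = D.pf (D.pe x) := by
  have h1 := D.peSpec x
  -- x = e i (pe x), pe x = f j (pf (pe x))
  have h2 := D.pfSpec (D.pe x)
  -- x = e i (f j (pf (pe x)))
  obtain ⟨i', j', h3⟩ := D.commEF (D.peIdx x) (D.pfIdx (D.pe x)) (D.pf (D.pe x))
  have hx : x = D.f j' (D.e i' (D.pf (D.pe x))) := by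
    rw [← h3, h2, h1]
  have : D.pf x = D.e i' (D.pf (D.pe x)) := by
    conv_lhs => rw [hx]
    exact D.pf_f _ _
  rw [this, D.pe_e]

lemma commute_pe_pf : Function.Commute D.pe D.pf := fun x => D.pe_pf_comm x

lemma iter_comm (a b : ℕ) (x : Λ) :
    D.pe^[a] (D.pf^[b] x) = D.pf^[b] (D.pe^[a] x) :=
  (D.commute_pe_pf.iterate_iterate a b) x

/-- Iterated push: `τ^[b](e_i x) = e_{i_b}(τ^[b] x)`. -/
lemma pf_iter_e (b : ℕ) (i : Fin m) (x : Λ) :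
    ∃ i' : Fin m, D.pf^[b] (D.e i x) = D.e i' (D.pf^[b] x) := by
  induction b generalizing i x with
  | zero => exact ⟨i, rfl⟩
  | succ b ih =>
    obtain ⟨i1, h1⟩ := D.pf_e i x
    obtain ⟨i2, h2⟩ := ih i1 (D.pf x)
    exact ⟨i2, by rw [Function.iterate_succ_apply, h1, h2, Function.iterate_succ_apply]⟩

/-- The action of a blue word on points. -/
def sigma (u : List (Fin m)) (x : Λ) : Λ := u.foldr D.e x

/-- The action of a red word on points. -/
def tau (v : List (Fin n)) (x : Λ) : Λ := v.foldr D.f x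

@[simp] lemma sigma_nil (x : Λ) : D.sigma [] x = x := rfl
@[simp] lemma sigma_cons (i : Fin m) (u : List (Fin m)) (x : Λ) :
    D.sigma (i :: u) x = D.e i (D.sigma u x) := rfl
@[simp] lemma tau_nil (x : Λ) : D.tau [] x = x := rfl
@[simp] lemma tau_cons (j : Fin n) (v : List (Fin n)) (x : Λ) :
    D.tau (j :: v) x = D.f j (D.tau v x) := rfl

lemma swap_sigma (v : List (Fin n)) (x : Λ) : D.swap.sigma v x = D.tau v x := rfl
lemma swap_tau (u : List (Fin m)) (x : Λ) : D.swap.tau u x = D.sigma u x := rfl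

lemma pe_iter_sigma (u : List (Fin m)) (x : Λ) :
    D.pe^[u.length] (D.sigma u x) = x := by
  induction u generalizing x with
  | nil => rfl
  | cons i u ih =>
    rw [sigma_cons, List.length_cons, Function.iterate_succ_apply, D.pe_e, ih]

lemma pf_iter_tau (v : List (Fin n)) (x : Λ) :
    D.pf^[v.length] (D.tau v x) = x := by
  induction v generalizing x with
  | nil => rfl
  | cons j v ih =>
    rw [tau_cons, List.length_cons, Function.iterate_succ_apply, D.pf_f, ih]

/-- Push `τ`-iterates through a blue word. -/
lemma pf_iter_sigma (b : ℕ) (u : List (Fin m)) (x : Λ) :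
    ∃ u' : List (Fin m), u'.length = u.length ∧
      D.pf^[b] (D.sigma u x) = D.sigma u' (D.pf^[b] x) := by
  induction u generalizing x with
  | nil => exact ⟨[], rfl, rfl⟩
  | cons i u ih =>
    obtain ⟨i', h1⟩ := D.pf_iter_e b i (D.sigma u x)
    obtain ⟨u', hl, h2⟩ := ih x
    exact ⟨i' :: u', by simp [hl], by rw [sigma_cons, h1, h2, sigma_cons]⟩

/-- Ancestor formula: if `σ_u τ_v z = x` then the `(|u|,|v|)`-ancestor of `x` is `z`. -/
lemma ancestor {u : List (Fin m)} {v : List (Fin n)} {x z : Λ}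
    (h : D.sigma u (D.tau v z) = x) :
    D.pe^[u.length] (D.pf^[v.length] x) = z := by
  obtain ⟨u', hl, h2⟩ := D.pf_iter_sigma v.length u (D.tau v z)
  rw [← h, h2, D.pf_iter_tau, ← hl, D.pe_iter_sigma]

/-- Unique factorization: equal normal forms of the same bidegree coincide. -/
lemma uniqueFact : ∀ {u u' : List (Fin m)} {v v' : List (Fin n)} {x : Λ},
    u.length = u'.length → v.length = v'.length →
    D.sigma u (D.tau v x) = D.sigma u' (D.tau v' x) → u = u' ∧ v = v' := by
  have tauInj : ∀ (v v' : List (Fin n)) (x : Λ), v.length = v'.length →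
      D.tau v x = D.tau v' x → v = v' := by
    intro v
    induction v with
    | nil => intro v' x hl _; exact (List.length_eq_zero_iff.mp hl.symm).symm
    | cons j v ih =>
      intro v' x hl h
      cases v' with
      | nil => simp at hl
      | cons j' v' =>
        simp only [tau_cons] at h
        obtain ⟨hj, hv⟩ := D.injF h
        simp only [List.length_cons, Nat.succ_inj] at hl
        rw [hj, ih v' x hl hv]
  intro u
  induction u with
  | nil =>
    intro u' v v' x hl hl' h
    obtain rfl : u' = [] := List.length_eq_zero_iff.mp hl.symm
    exact ⟨rfl, tauInj v v' x hl' h⟩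
  | cons i u ih =>
    intro u' v v' x hl hl' h
    cases u' with
    | nil => simp at hl
    | cons i' u' =>
      simp only [sigma_cons] at h
      obtain ⟨hi, hu⟩ := D.injE h
      simp only [List.length_cons, Nat.succ_inj] at hl
      obtain ⟨h1, h2⟩ := ih hl hl' hu
      exact ⟨by rw [hi, h1], h2⟩



lemma iter_mul_per {p : ℕ} {t0 : Λ} (hper : D.pe^[p] t0 = t0) (N : ℕ) :
    D.pe^[N * p] t0 = t0 := by
  induction N with
  | zero => simp
  | succ N ih => rw [Nat.succ_mul, Function.iterate_add_apply, hper, ih]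

/-- Iterating a mixed periodicity relation. -/
lemma iter_mixed {a b : ℕ} {t0 : Λ} (h : D.pe^[a] (D.pf^[b] t0) = t0) (k : ℕ) :
    D.pe^[k * a] (D.pf^[k * b] t0) = t0 := by
  induction k with
  | zero => simp
  | succ k ih =>
    have e1 : (k+1) * a = a + k * a := by ring
    have e2 : (k+1) * b = b + k * b := by ring
    rw [e1, e2]
    calc D.pe^[a + k*a] (D.pf^[b + k*b] t0)
        = D.pe^[a] (D.pe^[k*a] (D.pf^[b] (D.pf^[k*b] t0))) := by
          rw [Function.iterate_add_apply, Function.iterate_add_apply]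
      _ = D.pe^[a] (D.pf^[b] (D.pe^[k*a] (D.pf^[k*b] t0))) := by rw [D.iter_comm]
      _ = D.pe^[a] (D.pf^[b] t0) := by rw [ih]
      _ = t0 := h

/-- Iterating a relation `pf^[b] t0 = pe^[c] t0`. -/
lemma iter_diag {b c : ℕ} {t0 : Λ} (h : D.pf^[b] t0 = D.pe^[c] t0) (k : ℕ) :
    D.pf^[k * b] t0 = D.pe^[k * c] t0 := by
  induction k with
  | zero => simp
  | succ k ih =>
    have e1 : (k+1) * b = b + k * b := by ring
    have e2 : (k+1) * c = c + k * c := by ring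
    rw [e1, e2]
    calc D.pf^[b + k*b] t0
        = D.pf^[b] (D.pf^[k*b] t0) := Function.iterate_add_apply _ _ _ _
      _ = D.pf^[b] (D.pe^[k*c] t0) := by rw [ih]
      _ = D.pe^[k*c] (D.pf^[b] t0) := (D.iter_comm _ _ _).symm
      _ = D.pe^[k*c] (D.pe^[c] t0) := by rw [h]
      _ = D.pe^[k*c + c] t0 := (Function.iterate_add_apply _ _ _ _).symm
      _ = D.pe^[c + k*c] t0 := by rw [Nat.add_comm]

/-- The key combinatorial lemma: from a ring at a point off the (finite, backward-closed)
core `Λ0`, produce a totally aperiodic point. -/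
theorem core (hm : 2 ≤ m) (Λ0 : Set Λ)
    (hρ : ∀ t ∈ Λ0, D.pe t ∈ Λ0) (hτ : ∀ t ∈ Λ0, D.pf t ∈ Λ0)
    (t0 : Λ) (ht0 : t0 ∉ Λ0) (p : ℕ) (hp : 0 < p) (hper : D.pe^[p] t0 = t0)
    (hreach : ∃ a b, D.pe^[a] (D.pf^[b] t0) ∈ Λ0) :
    ∃ z : Λ, (∀ a b : ℕ, 0 < a + b → D.pe^[a] (D.pf^[b] z) ≠ z) ∧
      (∀ a b : ℕ, 0 < a → 0 < b → D.pe^[a] z ≠ D.pf^[b] z) := by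
  classical
  have hρiter : ∀ (a : ℕ) (t), t ∈ Λ0 → D.pe^[a] t ∈ Λ0 := by
    intro a; induction a with
    | zero => intro t ht; exact ht
    | succ a ih => intro t ht; rw [Function.iterate_succ_apply]; exact ih _ (hρ t ht)
  have hτiter : ∀ (b : ℕ) (t), t ∈ Λ0 → D.pf^[b] t ∈ Λ0 := by
    intro b; induction b with
    | zero => intro t ht; exact ht
    | succ b ih => intro t ht; rw [Function.iterate_succ_apply]; exact ih _ (hτ t ht)
  -- F2 : eventually the pure τ-ancestors of t0 lie in Λ0.
  obtain ⟨a₀, b₀, hab⟩ := hreach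
  have hb0 : ∀ b ≥ b₀, D.pf^[b] t0 ∈ Λ0 := by
    have h1 : D.pf^[b₀] t0 ∈ Λ0 := by
      have h2 : D.pe^[a₀ * p] (D.pf^[b₀] t0) ∈ Λ0 := by
        have e : a₀ * p = (a₀ * p - a₀) + a₀ := by
          have : a₀ ≤ a₀ * p := Nat.le_mul_of_pos_right a₀ hp
          omega
        rw [e, Function.iterate_add_apply]
        exact hρiter _ _ hab
      rwa [D.iter_comm, D.iter_mul_per hper] at h2
    intro b hb
    have e : b = (b - b₀) + b₀ := by omega
    rw [e, Function.iterate_add_apply]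
    exact hτiter _ _ h1
  -- t0 is not mixed-periodic with positive τ-component.
  have hNotMixed : ∀ a b : ℕ, 0 < b → D.pe^[a] (D.pf^[b] t0) ≠ t0 := by
    intro a b hb h
    have hk := D.iter_mixed h (b₀ + 1)
    have hmem : D.pf^[(b₀+1) * b] t0 ∈ Λ0 := by
      apply hb0
      calc b₀ ≤ (b₀ + 1) * 1 := by omega
        _ ≤ (b₀ + 1) * b := Nat.mul_le_mul_left _ hb
    have hmem2 : D.pe^[(b₀+1) * a] (D.pf^[(b₀+1) * b] t0) ∈ Λ0 := hρiter _ _ hmem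
    rw [hk] at hmem2
    exact ht0 hmem2
  -- the cycle of t0
  set C0 : Set Λ := {x | ∃ a : ℕ, D.pe^[a] t0 = x} with hC0
  have hC0disj : ∀ x ∈ C0, x ∉ Λ0 := by
    rintro x ⟨a, rfl⟩ hmem
    apply ht0
    have h2 : D.pe^[a * p - a] (D.pe^[a] t0) ∈ Λ0 := hρiter _ _ hmem
    rw [← Function.iterate_add_apply] at h2
    have e : a * p - a + a = a * p := by
      have : a ≤ a * p := Nat.le_mul_of_pos_right a hp
      omega
    rw [e, D.iter_mul_per hper] at h2
    exact h2
  -- choose a child of t0 off the cycle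
  have hz : ∃ i : Fin m, D.e i t0 ∉ C0 := by
    by_contra hcon
    push_neg at hcon
    have hkey : ∀ i : Fin m, D.e i t0 = D.e ⟨0, by omega⟩ t0 := by
      intro i
      obtain ⟨a1, h1⟩ := hcon i
      obtain ⟨a2, h2⟩ := hcon ⟨0, by omega⟩
      have k1 : D.pe^[a1 + 1] t0 = t0 := by
        rw [Function.iterate_succ_apply', h1, D.pe_e]
      have k2 : D.pe^[a2 + 1] t0 = t0 := by
        rw [Function.iterate_succ_apply', h2, D.pe_e]
      have key : D.pe^[a1] t0 = D.pe^[a2] t0 := by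
        calc D.pe^[a1] t0 = D.pe^[a1] (D.pe^[a2+1] t0) := by rw [k2]
          _ = D.pe^[a2] (D.pe^[a1+1] t0) := by
              rw [← Function.iterate_add_apply, ← Function.iterate_add_apply]
              ring_nf
          _ = D.pe^[a2] t0 := by rw [k1]
      rw [← h1, key, h2]
    have h01 := hkey ⟨1, by omega⟩
    have h02 := (D.injE h01).1
    simp only [Fin.mk.injEq] at h02
    omega
  obtain ⟨i, hiC0⟩ := hz
  have hpez : D.pe (D.e i t0) = t0 := D.pe_e i t0
  refine ⟨D.e i t0, ?_, ?_⟩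
  · -- P1
    intro a b hab' h
    rcases Nat.eq_zero_or_pos b with hb | hb
    · subst hb
      rw [Function.iterate_zero_apply] at h
      have ha : 0 < a := by omega
      have e : a = (a - 1) + 1 := by omega
      rw [e, Function.iterate_add_apply, Function.iterate_one, hpez] at h
      exact hiC0 ⟨a - 1, h⟩
    · obtain ⟨i', hpush⟩ := D.pf_iter_e b i t0
      rw [hpush] at h
      rcases Nat.eq_zero_or_pos a with ha | ha
      · subst ha
        rw [Function.iterate_zero_apply] at h
        obtain ⟨-, h2⟩ := D.injE h
        exact hNotMixed 0 b hb (by simpa using h2)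
      · have e : a = (a - 1) + 1 := by omega
        rw [e, Function.iterate_add_apply, Function.iterate_one, D.pe_e] at h
        have h2 : D.pe (D.pe^[a-1] (D.pf^[b] t0)) = t0 := by rw [h, hpez]
        have h3 : D.pe^[(a-1) + 1] (D.pf^[b] t0) = t0 := by
          rw [Function.iterate_succ_apply']; exact h2
        exact hNotMixed _ b hb h3
  · -- P2
    intro a b ha hb h
    obtain ⟨i', hpush⟩ := D.pf_iter_e b i t0
    rw [hpush] at h
    have e : a = (a - 1) + 1 := by omega
    rw [e, Function.iterate_add_apply, Function.iterate_one, hpez] at h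
    -- h : pe^[a-1] t0 = e i' (pf^[b] t0)
    have h2 : D.pe (D.pe^[a-1] t0) = D.pf^[b] t0 := by rw [h, D.pe_e]
    have h3 : D.pe^[(a-1) + 1] t0 = D.pf^[b] t0 := by
      rw [Function.iterate_succ_apply']; exact h2
    have h4 : D.pf^[b] t0 = D.pe^[a] t0 := by rw [← h3]; congr 1; omega
    have hk := D.iter_diag h4 (b₀ + 1)
    have hmem : D.pf^[(b₀+1) * b] t0 ∈ Λ0 := by
      apply hb0
      calc b₀ ≤ (b₀ + 1) * 1 := by omega
        _ ≤ (b₀ + 1) * b := Nat.mul_le_mul_left _ hb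
    rw [hk] at hmem
    exact hC0disj _ ⟨(b₀+1) * a, rfl⟩ hmem




lemma iter_split {k k' l l' : ℕ} (hk : k' ≤ k) (hl : l' ≤ l) (x : Λ) :
    D.pe^[k] (D.pf^[l] x) = D.pe^[k-k'] (D.pf^[l-l'] (D.pe^[k'] (D.pf^[l'] x))) := by
  conv_lhs => rw [show k = (k-k')+k' from by omega, show l = (l-l')+l' from by omega]
  rw [Function.iterate_add_apply, Function.iterate_add_apply D.pf, D.iter_comm k']

/-- A totally aperiodic point has distinct orbit points: the wandering property at the
level of indices. -/
lemma orbit_injective (z : Λ)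
    (P1 : ∀ a b : ℕ, 0 < a + b → D.pe^[a] (D.pf^[b] z) ≠ z)
    (P2 : ∀ a b : ℕ, 0 < a → 0 < b → D.pe^[a] z ≠ D.pf^[b] z) :
    ∀ (u u' : List (Fin m)) (v v' : List (Fin n)),
      D.sigma u (D.tau v z) = D.sigma u' (D.tau v' z) → u = u' ∧ v = v' := by
  intro u u' v v' h
  set x := D.sigma u' (D.tau v' z) with hx
  have anc1 : D.pe^[u.length] (D.pf^[v.length] x) = z := D.ancestor h
  have anc2 : D.pe^[u'.length] (D.pf^[v'.length] x) = z := D.ancestor rfl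
  set k := u.length
  set k' := u'.length
  set l := v.length
  set l' := v'.length
  by_cases hkl : k = k' ∧ l = l'
  · exact D.uniqueFact hkl.1 hkl.2 h
  exfalso
  rcases le_or_gt k' k with hk | hk <;> rcases le_or_gt l' l with hl | hl
  · -- k' ≤ k, l' ≤ l, not both equal
    have key : D.pe^[k-k'] (D.pf^[l-l'] z) = z := by
      conv_lhs => rw [← anc2]
      rw [← D.iter_split hk hl]
      exact anc1
    exact P1 _ _ (by omega) key
  · -- k' ≤ k, l < l'
    rcases Nat.eq_or_lt_of_le hk with hkeq | hk
    · -- k = k', l < l' : use P1 in the other direction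
      have key : D.pe^[k'-k] (D.pf^[l'-l] z) = z := by
        conv_lhs => rw [← anc1]
        rw [← D.iter_split (by omega : k ≤ k') (le_of_lt hl)]
        exact anc2
      exact P1 _ _ (by omega) key
    · -- k' < k, l < l' : P2
      have e1 : D.pe^[k-k'] z = D.pe^[k] (D.pf^[l'] x) := by
        conv_lhs => rw [← anc2]
        rw [← Function.iterate_add_apply, show k - k' + k' = k from by omega]
      have e2 : D.pf^[l'-l] z = D.pe^[k] (D.pf^[l'] x) := by
        conv_lhs => rw [← anc1]
        rw [D.iter_comm, ← Function.iterate_add_apply, show l' - l + l = l' from by omega,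
          ← D.iter_comm]
      exact P2 (k-k') (l'-l) (by omega) (by omega) (e1.trans e2.symm)
  · -- k < k', l' ≤ l : symmetric P2 or P1
    rcases Nat.eq_or_lt_of_le hl with hleq | hl
    · have key : D.pe^[k'-k] (D.pf^[l'-l] z) = z := by
        conv_lhs => rw [← anc1]
        rw [← D.iter_split (le_of_lt hk) (by omega : l ≤ l')]
        exact anc2
      exact P1 _ _ (by omega) key
    · -- k < k', l' < l : P2 swapped
      have e1 : D.pe^[k'-k] z = D.pe^[k'] (D.pf^[l] x) := by
        conv_lhs => rw [← anc1]
        rw [← Function.iterate_add_apply, show k' - k + k = k' from by omega]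
      have e2 : D.pf^[l-l'] z = D.pe^[k'] (D.pf^[l] x) := by
        conv_lhs => rw [← anc2]
        rw [D.iter_comm, ← Function.iterate_add_apply, show l - l' + l' = l from by omega,
          ← D.iter_comm]
      exact P2 (k'-k) (l-l') (by omega) (by omega) (e1.trans e2.symm)
  · -- k < k', l < l'
    have key : D.pe^[k'-k] (D.pf^[l'-l] z) = z := by
      conv_lhs => rw [← anc1]
      rw [← D.iter_split (le_of_lt hk) (le_of_lt hl)]
      exact anc2
    exact P1 _ _ (by omega) key


end AtomicData

end Statement5Aux

section Bridge
set_option linter.unusedSectionVars false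

open Statement5Aux

variable {H : Type*} [NormedAddCommGroup H] [InnerProductSpace ℂ H] [CompleteSpace H]
variable {Λ : Type*} (ξ : HilbertBasis Λ ℂ H)

lemma Statement5Aux.inner_basis (s t : Λ) : ⟪ξ s, ξ t⟫ = if s = t then 1 else 0 :=
  orthonormal_iff_ite.mp ξ.orthonormal s t

lemma Statement5Aux.eq_zero_of_inner (x : H) (h : ∀ t : Λ, ⟪ξ t, x⟫ = 0) : x = 0 := by
  apply ξ.repr.injective
  ext t
  rw [ξ.repr_apply_apply, h t]
  simp

lemma Statement5Aux.point_eq_of_smul {c d : ℂ} {x y : Λ} (hc : ‖c‖ = 1)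
    (h : c • ξ x = d • ξ y) : x = y := by
  by_contra hxy
  have h1 : ⟪ξ x, c • ξ x⟫ = ⟪ξ x, d • ξ y⟫ := by rw [h]
  rw [inner_smul_right, inner_smul_right, Statement5Aux.inner_basis,
    Statement5Aux.inner_basis, if_pos rfl, if_neg hxy] at h1
  simp only [mul_one, mul_zero] at h1
  rw [h1] at hc
  simp at hc

lemma Statement5Aux.inner_star_mul (A B : H →L[ℂ] H) (x y : H) :
    ⟪x, (star A * B) y⟫ = ⟪A x, B y⟫ := by
  rw [ContinuousLinearMap.mul_apply, ContinuousLinearMap.star_eq_adjoint,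
    ContinuousLinearMap.adjoint_inner_right]

lemma Statement5Aux.wordOp_cons {ι : Type*} (V : ι → H →L[ℂ] H) (a : ι) (w : List ι) :
    wordOp V (a :: w) = V a * wordOp V w := by
  simp [wordOp]

variable {k : ℕ} (W : Fin k → H →L[ℂ] H) (c : Fin k → Λ → ℂ) (E : Fin k → Λ → Λ)

lemma Statement5Aux.wordOp_apply_basis
    (hc : ∀ i t, ‖c i t‖ = 1) (hW : ∀ i t, W i (ξ t) = c i t • ξ (E i t))
    (u : List (Fin k)) (t : Λ) :
    ∃ d : ℂ, ‖d‖ = 1 ∧ wordOp W u (ξ t) = d • ξ (u.foldr E t) := by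
  induction u with
  | nil => exact ⟨1, by simp, by simp [wordOp]⟩
  | cons a u ih =>
    obtain ⟨d, hd, hdw⟩ := ih
    refine ⟨d * c a (u.foldr E t), by simp [hd, hc], ?_⟩
    rw [Statement5Aux.wordOp_cons, ContinuousLinearMap.mul_apply, hdw, map_smul,
      hW a (u.foldr E t), smul_smul]
    rfl

lemma Statement5Aux.atomic_inj
    (hiso : ∀ i i', star (W i) * W i' = if i = i' then 1 else 0)
    (hc : ∀ i t, ‖c i t‖ = 1) (hW : ∀ i t, W i (ξ t) = c i t • ξ (E i t)) :
    ∀ ⦃i i' : Fin k⦄ ⦃a a' : Λ⦄, E i a = E i' a' → i = i' ∧ a = a' := by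
  intro i i' a a' h
  have key : ⟪W i (ξ a), W i' (ξ a')⟫ =
      (starRingEnd ℂ) (c i a) * c i' a' := by
    rw [hW, hW, inner_smul_left, inner_smul_right, Statement5Aux.inner_basis,
      if_pos h, mul_one]
  have hca : c i a ≠ 0 := by
    intro h0; have h2 := hc i a; rw [h0] at h2; simp at h2
  have hca' : c i' a' ≠ 0 := by
    intro h0; have h2 := hc i' a'; rw [h0] at h2; simp at h2
  have hne : (starRingEnd ℂ) (c i a) * c i' a' ≠ 0 := by
    apply mul_ne_zero _ hca'
    rw [starRingEnd_apply]
    exact star_ne_zero.mpr hca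
  have key2 : ⟪W i (ξ a), W i' (ξ a')⟫ = ⟪ξ a, ((star (W i)) * W i') (ξ a')⟫ :=
    (Statement5Aux.inner_star_mul _ _ _ _).symm
  by_cases hii : i = i'
  · subst hii
    refine ⟨rfl, ?_⟩
    by_contra haa
    rw [key2, hiso, if_pos rfl, ContinuousLinearMap.one_apply,
      Statement5Aux.inner_basis, if_neg haa] at key
    exact hne key.symm
  · rw [key2, hiso, if_neg hii] at key
    simp only [ContinuousLinearMap.zero_apply, inner_zero_right] at key
    exact absurd key.symm hne

lemma Statement5Aux.atomic_sur
    (hdef : (∑ i, W i * star (W i)) = 1)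
    (hc : ∀ i t, ‖c i t‖ = 1) (hW : ∀ i t, W i (ξ t) = c i t • ξ (E i t))
    (t : Λ) : ∃ p : Fin k × Λ, E p.1 p.2 = t := by
  by_contra hcon
  push_neg at hcon
  have hz : ∀ i : Fin k, star (W i) (ξ t) = 0 := by
    intro i
    apply Statement5Aux.eq_zero_of_inner ξ
    intro s
    rw [ContinuousLinearMap.star_eq_adjoint, ContinuousLinearMap.adjoint_inner_right,
      hW, inner_smul_left, Statement5Aux.inner_basis, if_neg (hcon (i, s)), mul_zero]
  have : ξ t = 0 := by
    have h1 : (∑ i, W i * star (W i)) (ξ t) = ξ t := by rw [hdef]; rfl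
    rw [ContinuousLinearMap.sum_apply] at h1
    have h2 : ∀ i : Fin k, (W i * star (W i)) (ξ t) = 0 := by
      intro i
      rw [ContinuousLinearMap.mul_apply, hz i, map_zero]
    rw [Finset.sum_congr rfl (fun i _ => h2 i), Finset.sum_const_zero] at h1
    exact h1.symm
  have hn := ξ.orthonormal.1 t
  rw [this] at hn
  simp at hn

lemma Statement5Aux.atomic_adj
    (hiso : ∀ i i', star (W i) * W i' = if i = i' then 1 else 0)
    (hc : ∀ i t, ‖c i t‖ = 1) (hW : ∀ i t, W i (ξ t) = c i t • ξ (E i t))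
    (hinj : ∀ ⦃i i' : Fin k⦄ ⦃a a' : Λ⦄, E i a = E i' a' → i = i' ∧ a = a')
    (i : Fin k) (b : Λ) :
    star (W i) (ξ (E i b)) = (starRingEnd ℂ) (c i b) • ξ b := by
  have key : ∀ s : Λ, ⟪ξ s, star (W i) (ξ (E i b)) - (starRingEnd ℂ) (c i b) • ξ b⟫ = 0 := by
    intro s
    rw [inner_sub_right, ContinuousLinearMap.star_eq_adjoint,
      ContinuousLinearMap.adjoint_inner_right, hW, inner_smul_left, inner_smul_right,
      Statement5Aux.inner_basis, Statement5Aux.inner_basis]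
    by_cases hsb : s = b
    · subst hsb; rw [if_pos rfl, if_pos rfl]; ring
    · rw [if_neg hsb, if_neg (fun h => hsb (hinj h).2)]; ring
  have := Statement5Aux.eq_zero_of_inner ξ _ key
  rwa [sub_eq_zero] at this

lemma Statement5Aux.wordOp_isom {ι : Type*} (V : ι → H →L[ℂ] H)
    (hiso : ∀ i : ι, star (V i) * V i = 1) (u : List ι) :
    star (wordOp V u) * wordOp V u = 1 := by
  induction u with
  | nil => simp [wordOp]
  | cons a u ih =>
    rw [Statement5Aux.wordOp_cons, star_mul, mul_assoc, ← mul_assoc (star (V a)),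
      hiso a, one_mul, ih]

end Bridge

/-- For finitely correlated (type 1) irreducible atomic representations: a blue or red ring at
a standard basis vector orthogonal to the minimal cyclic coinvariant subspace `V` yields a
standard basis vector which is wandering. -/
theorem statement5 {m n : ℕ} (hm : 2 ≤ m) (hn : 2 ≤ n)
    {θ : Equiv.Perm (Fin m × Fin n)} {H : Type*}
    [NormedAddCommGroup H] [InnerProductSpace ℂ H] [CompleteSpace H]
    (ρ : TwoGraphRep m n θ H) (hCuntz : ρ.CuntzType) (hirr : ρ.Irreducible)
    {Λ : Type*} (ξ : HilbertBasis Λ ℂ H) (hAtomic : ρ.AtomicBasis ξ)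
    (V : Submodule ℂ H) (hV0 : V ≠ ⊥) (hVfin : FiniteDimensional ℂ V)
    (hVspan : ∃ Λ0 : Set Λ, V = Submodule.span ℂ (⇑ξ '' Λ0))
    (hVcoinvS : ∀ i, ∀ x ∈ V, star (ρ.S i) x ∈ V)
    (hVcoinvT : ∀ j, ∀ x ∈ V, star (ρ.T j) x ∈ V)
    (hVcyc : (Submodule.span ℂ {y : H | ∃ (u : List (Fin m)) (v : List (Fin n)),
        ∃ x ∈ V, y = (wordOp ρ.S u * wordOp ρ.T v) x}).topologicalClosure = ⊤)
    (hVmin : ∀ V' : Submodule ℂ H, V' ≠ ⊥ → FiniteDimensional ℂ V' →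
      (∃ Λ1 : Set Λ, V' = Submodule.span ℂ (⇑ξ '' Λ1)) →
      (∀ i, ∀ x ∈ V', star (ρ.S i) x ∈ V') →
      (∀ j, ∀ x ∈ V', star (ρ.T j) x ∈ V') →
      (Submodule.span ℂ {y : H | ∃ (u : List (Fin m)) (v : List (Fin n)),
        ∃ x ∈ V', y = (wordOp ρ.S u * wordOp ρ.T v) x}).topologicalClosure = ⊤ →
      V ≤ V')
    (hζ : ∃ t : Λ, ξ t ∈ Vᗮ ∧ (ρ.HasBlueRing (ξ t) ∨ ρ.HasRedRing (ξ t))) :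
    ∃ t : Λ, ρ.IsWanderingRep (ξ t) := by
  classical
  obtain ⟨Λ0, hΛ0⟩ := hVspan
  obtain ⟨hS, hT⟩ := hAtomic
  choose cS ES hcS hES using hS
  choose cT ET hcT hET using hT
  -- basic structure of the atomic action on basis indices
  have hSinj := Statement5Aux.atomic_inj ξ ρ.S cS ES ρ.isometS hcS hES
  have hTinj := Statement5Aux.atomic_inj ξ ρ.T cT ET ρ.isometT hcT hET
  have hSsur := Statement5Aux.atomic_sur ξ ρ.S cS ES hCuntz.1 hcS hES
  have hTsur := Statement5Aux.atomic_sur ξ ρ.T cT ET hCuntz.2 hcT hET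
  have hcommEF : ∀ (i : Fin m) (j : Fin n) (a : Λ), ∃ (i' : Fin m) (j' : Fin n),
      ES i (ET j a) = ET j' (ES i' a) := by
    intro i j a
    refine ⟨(θ (i,j)).1, (θ (i,j)).2, ?_⟩
    have h1 : (ρ.S i * ρ.T j) (ξ a) = (ρ.T (θ (i,j)).2 * ρ.S (θ (i,j)).1) (ξ a) := by
      rw [ρ.comm]
    rw [ContinuousLinearMap.mul_apply, ContinuousLinearMap.mul_apply, hET, map_smul,
      hES, hES, map_smul, hET, smul_smul, smul_smul] at h1
    exact Statement5Aux.point_eq_of_smul ξ (by simp [norm_mul, hcS, hcT]) h1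
  have hcommFE : ∀ (j : Fin n) (i : Fin m) (a : Λ), ∃ (j' : Fin n) (i' : Fin m),
      ET j (ES i a) = ES i' (ET j' a) := by
    intro j i a
    refine ⟨(θ.symm (i,j)).2, (θ.symm (i,j)).1, ?_⟩
    have h1 := ρ.comm (θ.symm (i,j)).1 (θ.symm (i,j)).2
    rw [Prod.mk.eta, Equiv.apply_symm_apply] at h1
    have h2 : (ρ.T j * ρ.S i) (ξ a) =
        (ρ.S (θ.symm (i,j)).1 * ρ.T (θ.symm (i,j)).2) (ξ a) := by rw [h1]
    rw [ContinuousLinearMap.mul_apply, ContinuousLinearMap.mul_apply, hES, map_smul,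
      hET, hET, map_smul, hES, smul_smul, smul_smul] at h2
    exact Statement5Aux.point_eq_of_smul ξ (by simp [norm_mul, hcS, hcT]) h2
  have hDex : ∃ D : Statement5Aux.AtomicData m n Λ, D.e = ES ∧ D.f = ET :=
    ⟨⟨ES, ET, hSinj, hTinj, hSsur, hTsur, hcommEF, hcommFE⟩, rfl, rfl⟩
  obtain ⟨D, hDe, hDf⟩ := hDex
  have hsig : ∀ (u : List (Fin m)) (t : Λ), D.sigma u t = u.foldr ES t := by
    intro u t; rw [Statement5Aux.AtomicData.sigma, hDe]
  have htau : ∀ (v : List (Fin n)) (t : Λ), D.tau v t = v.foldr ET t := by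
    intro v t; rw [Statement5Aux.AtomicData.tau, hDf]
  -- word actions
  have hSword : ∀ (u : List (Fin m)) (t : Λ), ∃ d : ℂ, ‖d‖ = 1 ∧
      wordOp ρ.S u (ξ t) = d • ξ (D.sigma u t) := by
    intro u t
    obtain ⟨d, hd, h⟩ := Statement5Aux.wordOp_apply_basis ξ ρ.S cS ES hcS hES u t
    exact ⟨d, hd, by rw [h, hsig]⟩
  have hTword : ∀ (v : List (Fin n)) (t : Λ), ∃ d : ℂ, ‖d‖ = 1 ∧
      wordOp ρ.T v (ξ t) = d • ξ (D.tau v t) := by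
    intro v t
    obtain ⟨d, hd, h⟩ := Statement5Aux.wordOp_apply_basis ξ ρ.T cT ET hcT hET v t
    exact ⟨d, hd, by rw [h, htau]⟩
  have hword : ∀ (u : List (Fin m)) (v : List (Fin n)) (t : Λ), ∃ d : ℂ, ‖d‖ = 1 ∧
      (wordOp ρ.S u * wordOp ρ.T v) (ξ t) = d • ξ (D.sigma u (D.tau v t)) := by
    intro u v t
    obtain ⟨d1, hd1, h1⟩ := hTword v t
    obtain ⟨d2, hd2, h2⟩ := hSword u (D.tau v t)
    refine ⟨d1 * d2, by simp [norm_mul, hd1, hd2], ?_⟩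
    rw [ContinuousLinearMap.mul_apply, h1, map_smul, h2, smul_smul]
  -- membership in V
  have hmem : ∀ t : Λ, ξ t ∈ V ↔ t ∈ Λ0 := by
    intro t
    constructor
    · intro ht
      by_contra htΛ
      have hperp : ∀ y ∈ Submodule.span ℂ (⇑ξ '' Λ0), ⟪(ξ t : H), y⟫ = 0 := by
        intro y hy
        induction hy using Submodule.span_induction with
        | mem x hx =>
          obtain ⟨s, hs, rfl⟩ := hx
          rw [Statement5Aux.inner_basis, if_neg]
          rintro rfl; exact htΛ hs
        | zero => simp
        | add x y hx hy ihx ihy => rw [inner_add_right, ihx, ihy, add_zero]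
        | smul c x hx ih => rw [inner_smul_right, ih, mul_zero]
      have h2 := hperp (ξ t) (by rw [← hΛ0]; exact ht)
      rw [Statement5Aux.inner_basis, if_pos rfl] at h2
      norm_num at h2
    · intro ht; rw [hΛ0]; exact Submodule.subset_span ⟨t, ht, rfl⟩
  -- Λ0 is closed under taking parents
  have hρclosed : ∀ t ∈ Λ0, D.pe t ∈ Λ0 := by
    intro t ht
    have hspec : ES (D.peIdx t) (D.pe t) = t := by
      have h0 := D.peSpec t; rwa [hDe] at h0
    have h1 : star (ρ.S (D.peIdx t)) (ξ t) ∈ V := hVcoinvS _ _ ((hmem t).mpr ht)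
    have h2 : star (ρ.S (D.peIdx t)) (ξ t) =
        (starRingEnd ℂ) (cS (D.peIdx t) (D.pe t)) • ξ (D.pe t) := by
      have h4 := Statement5Aux.atomic_adj ξ ρ.S cS ES ρ.isometS hcS hES hSinj
        (D.peIdx t) (D.pe t)
      rw [hspec] at h4
      exact h4
    rw [h2] at h1
    have hne : (starRingEnd ℂ) (cS (D.peIdx t) (D.pe t)) ≠ 0 := by
      rw [starRingEnd_apply]
      apply star_ne_zero.mpr
      intro h0; have h3 := hcS (D.peIdx t) (D.pe t); rw [h0] at h3; simp at h3
    have h3 := V.smul_mem ((starRingEnd ℂ) (cS (D.peIdx t) (D.pe t)))⁻¹ h1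
    rw [smul_smul, inv_mul_cancel₀ hne, one_smul] at h3
    exact (hmem _).mp h3
  have hτclosed : ∀ t ∈ Λ0, D.pf t ∈ Λ0 := by
    intro t ht
    have hspec : ET (D.pfIdx t) (D.pf t) = t := by
      have h0 := D.pfSpec t; rwa [hDf] at h0
    have h1 : star (ρ.T (D.pfIdx t)) (ξ t) ∈ V := hVcoinvT _ _ ((hmem t).mpr ht)
    have h2 : star (ρ.T (D.pfIdx t)) (ξ t) =
        (starRingEnd ℂ) (cT (D.pfIdx t) (D.pf t)) • ξ (D.pf t) := by
      have h4 := Statement5Aux.atomic_adj ξ ρ.T cT ET ρ.isometT hcT hET hTinj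
        (D.pfIdx t) (D.pf t)
      rw [hspec] at h4
      exact h4
    rw [h2] at h1
    have hne : (starRingEnd ℂ) (cT (D.pfIdx t) (D.pf t)) ≠ 0 := by
      rw [starRingEnd_apply]
      apply star_ne_zero.mpr
      intro h0; have h3 := hcT (D.pfIdx t) (D.pf t); rw [h0] at h3; simp at h3
    have h3 := V.smul_mem ((starRingEnd ℂ) (cT (D.pfIdx t) (D.pf t)))⁻¹ h1
    rw [smul_smul, inv_mul_cancel₀ hne, one_smul] at h3
    exact (hmem _).mp h3
  -- the ring vector
  obtain ⟨t0, ht0V, hring⟩ := hζ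
  have ht0 : t0 ∉ Λ0 := by
    intro h
    have h1 : (ξ t0 : H) ∈ V := (hmem t0).mpr h
    have h2 := (Submodule.mem_orthogonal V (ξ t0)).mp ht0V (ξ t0) h1
    rw [Statement5Aux.inner_basis, if_pos rfl] at h2
    norm_num at h2
  -- reachability from Λ0
  have hreach : ∀ t : Λ, ∃ (u : List (Fin m)) (v : List (Fin n)) (r : Λ),
      r ∈ Λ0 ∧ D.sigma u (D.tau v r) = t := by
    intro t
    by_contra hcon
    push_neg at hcon
    set K := Submodule.span ℂ {y : H | ∃ (u : List (Fin m)) (v : List (Fin n)),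
        ∃ x ∈ V, y = (wordOp ρ.S u * wordOp ρ.T v) x} with hK
    have hgen : ∀ (u : List (Fin m)) (v : List (Fin n)) (x : H), x ∈ V →
        ⟪(wordOp ρ.S u * wordOp ρ.T v) x, (ξ t : H)⟫ = 0 := by
      intro u v x hxV
      rw [hΛ0] at hxV
      induction hxV using Submodule.span_induction with
      | mem x hx =>
        obtain ⟨r, hr, rfl⟩ := hx
        obtain ⟨d, hd, hw⟩ := hword u v r
        rw [hw, inner_smul_left, Statement5Aux.inner_basis,
          if_neg (hcon u v r hr), mul_zero]
      | zero => simp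
      | add x y hx hy ihx ihy => rw [map_add, inner_add_left, ihx, ihy, add_zero]
      | smul c x hx ih => rw [map_smul, inner_smul_left, ih, mul_zero]
    have hKt : (ξ t : H) ∈ Kᗮ := by
      rw [Submodule.mem_orthogonal]
      intro y hy
      induction hy using Submodule.span_induction with
      | mem y hy =>
        obtain ⟨u, v, x, hxV, rfl⟩ := hy
        exact hgen u v x hxV
      | zero => simp
      | add x y hx hy ihx ihy => rw [inner_add_left, ihx, ihy, add_zero]
      | smul c x hx ih => rw [inner_smul_left, ih, mul_zero]
    have hKtop : K.topologicalClosure = ⊤ := hVcyc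
    rw [Submodule.topologicalClosure_eq_top_iff] at hKtop
    rw [hKtop, Submodule.mem_bot] at hKt
    have hn := ξ.orthonormal.1 t
    rw [hKt] at hn
    simp at hn
  have hreach0 : ∃ a b : ℕ, D.pe^[a] (D.pf^[b] t0) ∈ Λ0 := by
    obtain ⟨u, v, r, hr, hσ⟩ := hreach t0
    exact ⟨u.length, v.length, by rw [D.ancestor hσ]; exact hr⟩
  -- obtain the aperiodic point z from the core lemma
  have hz : ∃ z : Λ, (∀ a b : ℕ, 0 < a + b → D.pe^[a] (D.pf^[b] z) ≠ z) ∧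
      (∀ a b : ℕ, 0 < a → 0 < b → D.pe^[a] z ≠ D.pf^[b] z) := by
    rcases hring with hblue | hred
    · obtain ⟨u, hu, c, hc, hcu⟩ := hblue
      obtain ⟨d, hd, hw⟩ := hSword u t0
      have hpt : D.sigma u t0 = t0 :=
        Statement5Aux.point_eq_of_smul ξ hd (by rw [← hw, hcu])
      have hper := D.pe_iter_sigma u t0
      rw [hpt] at hper
      exact D.core hm Λ0 hρclosed hτclosed t0 ht0 u.length
        (List.length_pos_iff.mpr hu) hper hreach0
    · obtain ⟨v, hv, c, hc, hcv⟩ := hred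
      obtain ⟨d, hd, hw⟩ := hTword v t0
      have hpt : D.tau v t0 = t0 :=
        Statement5Aux.point_eq_of_smul ξ hd (by rw [← hw, hcv])
      have hper := D.pf_iter_tau v t0
      rw [hpt] at hper
      have hreach0' : ∃ a b : ℕ, D.swap.pe^[a] (D.swap.pf^[b] t0) ∈ Λ0 := by
        obtain ⟨a, b, hab⟩ := hreach0
        refine ⟨b, a, ?_⟩
        show D.pf^[b] (D.pe^[a] t0) ∈ Λ0
        rw [← D.iter_comm]
        exact hab
      obtain ⟨z, P1s, P2s⟩ := D.swap.core hn Λ0 hτclosed hρclosed t0 ht0 v.length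
        (List.length_pos_iff.mpr hv) hper hreach0'
      refine ⟨z, ?_, ?_⟩
      · intro a b hab heq
        apply P1s b a (by omega)
        show D.pf^[b] (D.pe^[a] z) = z
        rw [← D.iter_comm]
        exact heq
      · intro a b ha hb heq
        exact P2s b a hb ha heq.symm
  obtain ⟨z, P1, P2⟩ := hz
  have horb := D.orbit_injective z P1 P2
  -- ξ z is a wandering vector
  refine ⟨z, ξ.orthonormal.1 z, ?_⟩
  intro u u' v v'
  by_cases heq : u = u' ∧ v = v'
  · obtain ⟨rfl, rfl⟩ := heq
    rw [if_pos ⟨rfl, rfl⟩]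
    have hisoS : ∀ i : Fin m, star (ρ.S i) * ρ.S i = 1 := by
      intro i; have h := ρ.isometS i i; rwa [if_pos rfl] at h
    have hisoT : ∀ j : Fin n, star (ρ.T j) * ρ.T j = 1 := by
      intro j; have h := ρ.isometT j j; rwa [if_pos rfl] at h
    have hA : star (wordOp ρ.S u * wordOp ρ.T v) * (wordOp ρ.S u * wordOp ρ.T v) = 1 := by
      rw [star_mul, mul_assoc, ← mul_assoc (star (wordOp ρ.S u)),
        Statement5Aux.wordOp_isom ρ.S hisoS u, one_mul,
        Statement5Aux.wordOp_isom ρ.T hisoT v]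
    rw [← Statement5Aux.inner_star_mul, hA, ContinuousLinearMap.one_apply,
      Statement5Aux.inner_basis, if_pos rfl]
  · rw [if_neg heq]
    obtain ⟨d, hd, hw⟩ := hword u v z
    obtain ⟨d', hd', hw'⟩ := hword u' v' z
    have hne : D.sigma u (D.tau v z) ≠ D.sigma u' (D.tau v' z) := by
      intro h
      exact heq ⟨(horb u u' v v' h).1, (horb u u' v v' h).2⟩
    rw [hw, hw', inner_smul_left, inner_smul_right, Statement5Aux.inner_basis,
      if_neg hne, mul_zero, mul_zero]
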